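/- Under zero-forcing power control p_k = √η · h_k*/|h_k|² with η = d·p_max·min_{k∈S} |h_k|², the power constraint p_k²/d ≤ p_max (interpreting |p_k|²/d ≤ p_max) holds for all k ∈ S, and the aggregation MSE equals (σ²/p_max)·max_{k∈S} 1/|h_k|². -/

import Mathlib

open Real Finset

/-- Under zero-forcing power control `p_k = √η·conj(h_k)/|h_k|²` with
`η = d·p_max·min_{k∈S}|h_k|²`, the power constraint `|p_k|²/d ≤ p_max` holds for every
`k ∈ S`, and the aggregation MSE
`∑_{k∈S} |1 - p_k h_k/√η|² + dσ²/η` equals `(σ²/p_max)·max_{k∈S} 1/|h_k|²`. -/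
theorem zf_power_constraint_and_mse
    {ι : Type*} (S : Finset ι) (hS : S.Nonempty)
    (h : ι → ℂ) (hne : ∀ k ∈ S, h k ≠ 0)
    (pmax d σ2 : ℝ) (hpmax : 0 < pmax) (hd : 0 < d) (hσ : 0 < σ2)
    (η : ℝ) (hη : η = d * pmax * S.inf' hS fun k => ‖h k‖ ^ 2)
    (p : ι → ℂ)
    (hp : ∀ k ∈ S, p k = (Real.sqrt η : ℂ) * (starRingEnd ℂ (h k)) /
        ((‖h k‖ : ℂ) ^ 2))
    (MSE : ℝ)
    (hMSE : MSE = (∑ k ∈ S, ‖1 - p k * h k / (Real.sqrt η : ℂ)‖ ^ 2)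
        + d * σ2 / η) :
    (∀ k ∈ S, ‖p k‖ ^ 2 / d ≤ pmax) ∧
      MSE = σ2 / pmax * S.sup' hS fun k => 1 / ‖h k‖ ^ 2 := by
  set m := S.inf' hS fun k => ‖h k‖ ^ 2 with hm
  obtain ⟨k0, hk0, hk0eq⟩ := S.exists_mem_eq_inf' hS fun k => ‖h k‖ ^ 2
  have hmpos : 0 < m := by
    rw [hm, hk0eq]
    exact pow_pos (norm_pos_iff.mpr (hne k0 hk0)) 2
  have hηpos : 0 < η := by
    rw [hη]; positivity
  have hsq : Real.sqrt η ^ 2 = η := Real.sq_sqrt hηpos.le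
  have habs : ∀ k ∈ S, ‖p k‖ ^ 2 = η / ‖h k‖ ^ 2 := by
    intro k hk
    have hpos : 0 < ‖h k‖ := norm_pos_iff.mpr (hne k hk)
    rw [hp k hk]
    rw [norm_div, norm_mul, norm_pow, Complex.norm_conj,
      Complex.norm_real, Complex.norm_real, Real.norm_eq_abs, Real.norm_eq_abs,
      abs_of_nonneg (Real.sqrt_nonneg η), abs_of_nonneg hpos.le]
    field_simp
    rw [hsq]
  have hmle : ∀ k ∈ S, m ≤ ‖h k‖ ^ 2 := fun k hk =>
    Finset.inf'_le _ hk
  constructor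
  · intro k hk
    have hpos : 0 < ‖h k‖ ^ 2 :=
      pow_pos (norm_pos_iff.mpr (hne k hk)) 2
    rw [habs k hk, hη]
    rw [div_div, div_le_iff₀ (by positivity)]
    have := hmle k hk
    calc d * pmax * m ≤ d * pmax * ‖h k‖ ^ 2 := by
          exact mul_le_mul_of_nonneg_left this (by positivity)
      _ = pmax * (‖h k‖ ^ 2 * d) := by ring
  · have hzero : ∀ k ∈ S, ‖1 - p k * h k / (Real.sqrt η : ℂ)‖ ^ 2 = 0 := by
      intro k hk
      have hpos : 0 < ‖h k‖ := norm_pos_iff.mpr (hne k hk)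
      have hs : (Real.sqrt η : ℂ) ≠ 0 := by
        simp [Complex.ofReal_ne_zero, Real.sqrt_ne_zero'.mpr hηpos]
      have hc : ((‖h k‖ : ℂ)) ^ 2 ≠ 0 := by
        simp [Complex.ofReal_ne_zero, hpos.ne']
      have : p k * h k = (Real.sqrt η : ℂ) := by
        rw [hp k hk]
        have hcc : (starRingEnd ℂ) (h k) * h k = ((‖h k‖ : ℂ)) ^ 2 := by
          rw [mul_comm, Complex.mul_conj, ← Complex.sq_norm (h k)]
          push_cast
          ring
        field_simp
        rw [hcc, div_self hc]
      rw [this, div_self hs]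
      simp
    have hsup : (S.sup' hS fun k => 1 / ‖h k‖ ^ 2) = 1 / m := by
      apply le_antisymm
      · apply Finset.sup'_le
        intro k hk
        exact one_div_le_one_div_of_le hmpos (hmle k hk)
      · apply Finset.le_sup'_of_le _ hk0
        rw [hm, hk0eq]
    rw [hMSE, Finset.sum_congr rfl hzero, Finset.sum_const_zero, zero_add, hη, hsup]
    field_simp
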